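/- Parameter monotonicity and positive invariance of the time governor. Let s_min ≤ s_max be real numbers, k > 0 a constant, g : [0,∞) → ℝ a continuous function with g(t) ≥ 0 for all t ≥ 0, and let s : [0,∞) → ℝ be differentiable with s'(t) = min(g(t), k·(s_max − s(t))) for all t ≥ 0 and s(0) ∈ [s_min, s_max]. Then s is monotone nondecreasing on [0,∞) and s(t) ∈ [s_min, s_max] for all t ≥ 0. -/

import Mathlib

/-- Parameter monotonicity and positive invariance of the time governor. -/
theorem time_governor_monotone_and_invariant
    (smin smax k : ℝ) (hle : smin ≤ smax) (hk : 0 < k)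
    (g : ℝ → ℝ) (s : ℝ → ℝ)
    (hg_cont : ContinuousOn g (Set.Ici 0))
    (hg_nonneg : ∀ t : ℝ, 0 ≤ t → 0 ≤ g t)
    (hs : ∀ t : ℝ, 0 ≤ t → HasDerivAt s (min (g t) (k * (smax - s t))) t)
    (h0 : s 0 ∈ Set.Icc smin smax) :
    MonotoneOn s (Set.Ici 0) ∧ ∀ t : ℝ, 0 ≤ t → s t ∈ Set.Icc smin smax := by
  set F : ℝ → ℝ := fun t => Real.exp (k * t) * (s t - smax) with hF
  have hFderiv : ∀ t ∈ Set.Ici (0 : ℝ), HasDerivAt F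
      (Real.exp (k * t) * (k * (s t - smax) + min (g t) (k * (smax - s t)))) t := by
    intro t ht
    have h1 : HasDerivAt (fun t => Real.exp (k * t)) (k * Real.exp (k * t)) t := by
      simpa [mul_comm, Function.comp_def] using (Real.hasDerivAt_exp (k * t)).comp t
        ((hasDerivAt_id t).const_mul k)
    have h2 : HasDerivAt (fun y => Real.exp (k * y) * (s y - smax)) _ t :=
      h1.mul ((hs t ht).sub_const smax)
    convert h2 using 1
    ring
  have hF_cont : ContinuousOn F (Set.Ici 0) := fun t ht =>
    (hFderiv t ht).continuousAt.continuousWithinAt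
  have hsmax : ∀ t, 0 ≤ t → s t ≤ smax := by
    intro t ht
    have hanti : AntitoneOn F (Set.Ici 0) := by
      apply antitoneOn_of_deriv_nonpos (convex_Ici 0) hF_cont
      · intro x hx
        rw [interior_Ici] at hx
        exact ((hFderiv x (Set.mem_Ici.mpr (le_of_lt hx))).differentiableAt).differentiableWithinAt
      · intro x hx
        rw [interior_Ici] at hx
        rw [(hFderiv x (Set.mem_Ici.mpr (le_of_lt hx))).deriv]
        have hmin : min (g x) (k * (smax - s x)) ≤ k * (smax - s x) := min_le_right _ _
        nlinarith [Real.exp_pos (k * x)]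
    have hle' : F t ≤ F 0 := hanti Set.self_mem_Ici ht ht
    have hF0 : F 0 ≤ 0 := by
      simp only [hF, mul_zero, Real.exp_zero, one_mul]
      linarith [h0.2]
    have hFt : F t ≤ 0 := le_trans hle' hF0
    simp only [hF] at hFt
    nlinarith [Real.exp_pos (k * t)]
  have hmono : MonotoneOn s (Set.Ici 0) := by
    apply monotoneOn_of_deriv_nonneg (convex_Ici 0)
      (fun t ht => (hs t ht).continuousAt.continuousWithinAt)
    · intro x hx
      rw [interior_Ici] at hx
      exact ((hs x (le_of_lt hx)).differentiableAt).differentiableWithinAt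
    · intro x hx
      rw [interior_Ici] at hx
      rw [(hs x (le_of_lt hx)).deriv]
      exact le_min (hg_nonneg x (le_of_lt hx))
        (by nlinarith [hsmax x (le_of_lt hx)])
  refine ⟨hmono, fun t ht => ⟨?_, hsmax t ht⟩⟩
  have := hmono Set.self_mem_Ici ht ht
  linarith [h0.1]
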